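/- Let y : J → ℝ be a differentiable function on an open interval J satisfying y'(x) = Q(x,y(x))/P(x,y(x)) for all x ∈ J, and suppose P(x,y(x)) ≠ 0 and Δ(x,y(x)) ≠ 0 on J. Then y is twice differentiable and satisfies equation (24): y''(x) + [x(x−1)·P_y]/Δ·(y'(x))³ + [(P_x − Q_y)x² + (Q_y − P_x − 2P)x + P_y·y² − (2P + P_y)·y + 2P]/Δ·(y'(x))² + [−Q_x·x² + (Q_x + 2Q)x + (P_x − Q_y)y² + (2Q − P_x + Q_y)y − 2Q]/Δ·y'(x) + [y(1−y)·Q_x]/Δ = 0 for all x ∈ J, where all coefficient functions are evaluated at (x, y(x)). Thus dy/dx = Q/P is a particular integral of equation (24). -/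

import Mathlib

/-- Partial derivative with respect to the first argument. -/
noncomputable def pdx (F : ℝ × ℝ → ℝ) (p : ℝ × ℝ) : ℝ := fderiv ℝ F p (1, 0)

/-- Partial derivative with respect to the second argument. -/
noncomputable def pdy (F : ℝ × ℝ → ℝ) (p : ℝ × ℝ) : ℝ := fderiv ℝ F p (0, 1)

/-- `Δ(x,y) = y²P − yP + x²Q − xQ`. -/
noncomputable def Delta (P Q : ℝ × ℝ → ℝ) (p : ℝ × ℝ) : ℝ :=
  p.2 ^ 2 * P p - p.2 * P p + p.1 ^ 2 * Q p - p.1 * Q p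

/-- The left-hand side of equation (24), the second-order ODE cubic in the first
derivative associated with the planar system `dy/dx = Q/P`, evaluated with
`y = y(x)`, `y' = y'(x)`, `y'' = y''(x)`. -/
noncomputable def eq24LHS (P Q : ℝ × ℝ → ℝ) (x yx y1 y2 : ℝ) : ℝ :=
  y2
    + (x * (x - 1) * pdy P (x, yx)) / Delta P Q (x, yx) * y1 ^ 3
    + ((pdx P (x, yx) - pdy Q (x, yx)) * x ^ 2
        + (pdy Q (x, yx) - pdx P (x, yx) - 2 * P (x, yx)) * x
        + pdy P (x, yx) * yx ^ 2
        - (2 * P (x, yx) + pdy P (x, yx)) * yx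
        + 2 * P (x, yx)) / Delta P Q (x, yx) * y1 ^ 2
    + (-(pdx Q (x, yx)) * x ^ 2
        + (pdx Q (x, yx) + 2 * Q (x, yx)) * x
        + (pdx P (x, yx) - pdy Q (x, yx)) * yx ^ 2
        + (2 * Q (x, yx) - pdx P (x, yx) + pdy Q (x, yx)) * yx
        - 2 * Q (x, yx)) / Delta P Q (x, yx) * y1
    + (yx * (1 - yx) * pdx Q (x, yx)) / Delta P Q (x, yx)

/-- Every solution of `dy/dx = Q(x,y)/P(x,y)` (with `P ≠ 0` and
`Δ ≠ 0` along it) is twice differentiable and satisfies equation (24); i.e.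
`dy/dx = Q/P` is a particular integral of equation (24). -/
theorem stmt_9 (P Q : ℝ × ℝ → ℝ) (hP : ContDiff ℝ 1 P) (hQ : ContDiff ℝ 1 Q)
    (J : Set ℝ) (hJ : IsOpen J) (hJconn : IsPreconnected J)
    (y : ℝ → ℝ)
    (hy : ∀ x ∈ J, HasDerivAt y (Q (x, y x) / P (x, y x)) x)
    (hP0 : ∀ x ∈ J, P (x, y x) ≠ 0)
    (hΔ : ∀ x ∈ J, Delta P Q (x, y x) ≠ 0) :
    ∀ x ∈ J, ∃ y2 : ℝ,
      HasDerivAt (deriv y) y2 x ∧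
      eq24LHS P Q x (y x) (deriv y x) y2 = 0 := by
  intro x hx
  have hyx := hy x hx
  set y1 : ℝ := Q (x, y x) / P (x, y x) with hy1
  have hc : HasDerivAt (fun t => ((t, y t) : ℝ × ℝ)) (1, y1) x :=
    HasDerivAt.prodMk (hasDerivAt_id x) hyx
  have key : ∀ F : ℝ × ℝ → ℝ, ContDiff ℝ 1 F →
      HasDerivAt (fun t => F (t, y t)) (pdx F (x, y x) + y1 * pdy F (x, y x)) x := by
    intro F hF
    have hFd : HasFDerivAt F (fderiv ℝ F (x, y x)) (x, y x) :=
      (hF.differentiable one_ne_zero (x, y x)).hasFDerivAt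
    have h := hFd.comp_hasDerivAt x hc
    have hval : fderiv ℝ F (x, y x) (1, y1)
        = pdx F (x, y x) + y1 * pdy F (x, y x) := by
      have h1 : ((1 : ℝ), y1) = (1, 0) + y1 • ((0 : ℝ), (1 : ℝ)) := by
        simp
      rw [h1, map_add, map_smul]
      simp [pdx, pdy, smul_eq_mul]
    rwa [hval] at h
  have hPd := key P hP
  have hQd := key Q hQ
  have hPne := hP0 x hx
  have hdiv := hQd.div hPd hPne
  set y2 : ℝ := ((pdx Q (x, y x) + y1 * pdy Q (x, y x)) * P (x, y x)
      - Q (x, y x) * (pdx P (x, y x) + y1 * pdy P (x, y x))) / P (x, y x) ^ 2 with hy2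
  refine ⟨y2, ?_, ?_⟩
  · apply hdiv.congr_of_eventuallyEq
    filter_upwards [hJ.mem_nhds hx] with t ht
    exact (hy t ht).deriv
  · have hderiv : deriv y x = y1 := hyx.deriv
    rw [hderiv]
    have hΔne := hΔ x hx
    rw [eq24LHS, hy2, hy1]
    rw [Delta] at hΔne ⊢
    set a := P (x, y x)
    set b := Q (x, y x)
    set px := pdx P (x, y x)
    set py := pdy P (x, y x)
    set qx := pdx Q (x, y x)
    set qy := pdy Q (x, y x)
    set yv := y x
    simp only at hΔne ⊢
    have hΔ2 : a * yv * (yv - 1) + b * x ^ 2 - b * x ≠ 0 := by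
      convert hΔne using 1; ring
    field_simp
    ring
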